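/- Let ρ^{SA} be a bipartite density matrix and {Π_a}, {Π'_b} two POVMs on the ancilla such that {Π'_b} is a coarse-graining of {Π_a} (i.e., Π'_b = Σ_a λ_{ba} Π_a with λ_{ba} ≥ 0, Σ_b λ_{ba} = 1). Then the daemonic ergotropy of the finer POVM dominates: Σ_a p_a E(ρ_a^S) ≥ Σ_b q_b E(σ_b^S), where (p_a, ρ_a^S) and (q_b, σ_b^S) are the outcome probabilities and conditional system states of the two POVMs. -/

import Mathlib

open Matrix
open scoped ComplexOrder

/-- Energy of a state `ρ` with respect to Hamiltonian `H`: `Tr[Hρ]` (real part). -/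
noncomputable def energy {d : ℕ} (H ρ : Matrix (Fin d) (Fin d) ℂ) : ℝ :=
  (Matrix.trace (H * ρ)).re

/-- Minimal energy achievable from `ρ` by unitaries (passive-state energy). -/
noncomputable def passiveEnergy {d : ℕ} (H ρ : Matrix (Fin d) (Fin d) ℂ) : ℝ :=
  sInf {x : ℝ | ∃ U ∈ Matrix.unitaryGroup (Fin d) ℂ, x = energy H (U * ρ * Uᴴ)}

/-- Ergotropy: maximal work extractable by unitaries. -/
noncomputable def ergotropy {d : ℕ} (H ρ : Matrix (Fin d) (Fin d) ℂ) : ℝ :=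
  energy H ρ - passiveEnergy H ρ

open Kronecker

/-- Partial trace over the ancilla (second factor). -/
noncomputable def ptraceA {dS dA : ℕ} (M : Matrix (Fin dS × Fin dA) (Fin dS × Fin dA) ℂ) :
    Matrix (Fin dS) (Fin dS) ℂ :=
  Matrix.of fun i j => ∑ k : Fin dA, M (i, k) (j, k)

/-- Probability of outcome associated to the POVM element `P` on the ancilla. -/
noncomputable def outProb {dS dA : ℕ} (ρSA : Matrix (Fin dS × Fin dA) (Fin dS × Fin dA) ℂ)
    (P : Matrix (Fin dA) (Fin dA) ℂ) : ℝ :=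
  (Matrix.trace (ρSA * ((1 : Matrix (Fin dS) (Fin dS) ℂ) ⊗ₖ P))).re

/-- Conditional (normalized) state of the system given the POVM element `P`. -/
noncomputable def condState {dS dA : ℕ} (ρSA : Matrix (Fin dS × Fin dA) (Fin dS × Fin dA) ℂ)
    (P : Matrix (Fin dA) (Fin dA) ℂ) : Matrix (Fin dS) (Fin dS) ℂ :=
  (outProb ρSA P)⁻¹ • ptraceA (ρSA * ((1 : Matrix (Fin dS) (Fin dS) ℂ) ⊗ₖ P))

namespace DaemonAux

open scoped Pointwise

/-! ### Basic facts about PSD matrices -/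

lemma quad_expand {d : ℕ} (σ : Matrix (Fin d) (Fin d) ℂ) (i j : Fin d) (c : ℂ) :
    dotProduct (star ((Pi.single i 1 + Pi.single j c : Fin d → ℂ)))
      (σ *ᵥ (Pi.single i 1 + Pi.single j c : Fin d → ℂ))
    = σ i i + σ i j * c + (starRingEnd ℂ) c * σ j i + (starRingEnd ℂ) c * σ j j * c := by
  have hst : star ((Pi.single i 1 + Pi.single j c : Fin d → ℂ))
      = (Pi.single i 1 + Pi.single j ((starRingEnd ℂ) c) : Fin d → ℂ) := by
    funext k
    rcases eq_or_ne k i with rfl | hki <;> rcases eq_or_ne k j with rfl | hkj <;>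
      simp_all [Pi.single_apply]
  rw [hst, Matrix.mulVec_add, Matrix.mulVec_single, Matrix.mulVec_single]
  simp only [add_dotProduct, dotProduct_add, single_dotProduct, Pi.smul_apply, op_smul_eq_mul,
    Matrix.col_apply]
  ring

lemma diag_nonneg {d : ℕ} {σ : Matrix (Fin d) (Fin d) ℂ} (hσ : σ.PosSemidef) (i : Fin d) :
    0 ≤ σ i i := by
  have h := hσ.dotProduct_mulVec_nonneg (Pi.single i 1)
  have hst : star ((Pi.single i 1 : Fin d → ℂ)) = (Pi.single i 1 : Fin d → ℂ) := by
    funext k; rcases eq_or_ne k i with rfl | hk <;> simp [Pi.single_apply]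
  rw [hst, Matrix.mulVec_single, single_dotProduct] at h
  simpa using h

lemma trace_re_nonneg {d : ℕ} {σ : Matrix (Fin d) (Fin d) ℂ} (hσ : σ.PosSemidef) :
    0 ≤ σ.trace.re := by
  rw [Matrix.trace, Complex.re_sum]
  exact Finset.sum_nonneg fun i _ => (Complex.le_def.mp (diag_nonneg hσ i)).1

lemma diag_re_le_trace {d : ℕ} {σ : Matrix (Fin d) (Fin d) ℂ} (hσ : σ.PosSemidef) (i : Fin d) :
    (σ i i).re ≤ σ.trace.re := by
  rw [Matrix.trace, Complex.re_sum]
  exact Finset.single_le_sum (f := fun j => (σ (j : Fin d) j).re)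
    (fun j _ => (Complex.le_def.mp (diag_nonneg hσ j)).1) (Finset.mem_univ i)

/-- entries of a PSD matrix are bounded by the (real part of the) trace. -/
lemma entry_abs_le_trace {d : ℕ} {σ : Matrix (Fin d) (Fin d) ℂ} (hσ : σ.PosSemidef)
    (i j : Fin d) : ‖σ i j‖ ≤ σ.trace.re := by
  rcases eq_or_ne i j with rfl | hij
  · have h0 := Complex.le_def.mp (diag_nonneg hσ i)
    have : ‖σ i i‖ = (σ i i).re := by
      rw [Complex.norm_def, Complex.normSq_apply, ← h0.2]
      simpa using Real.sqrt_mul_self h0.1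
    rw [this]; exact diag_re_le_trace hσ i
  · rcases eq_or_ne (σ i j) 0 with h0 | h0
    · rw [h0]; simpa using trace_re_nonneg hσ
    · set z := σ i j with hz
      set r : ℝ := ‖z‖ with hr
      have hrne : (r : ℂ) ≠ 0 := by
        simpa [hr] using norm_ne_zero_iff.mpr h0
      have hzz : z * (starRingEnd ℂ) z = ((r : ℂ))^2 := by
        rw [Complex.mul_conj, hr]
        norm_cast
        exact (Complex.sq_norm z).symm
      have hji : σ j i = (starRingEnd ℂ) z := by
        conv_lhs => rw [← hσ.1]
        rfl
      set c : ℂ := -(starRingEnd ℂ) z / (r : ℂ) with hc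
      have hQ := quad_expand σ i j c
      rw [hji, ← hz] at hQ
      have hQ2 : dotProduct (star ((Pi.single i 1 + Pi.single j c : Fin d → ℂ)))
          (σ *ᵥ (Pi.single i 1 + Pi.single j c : Fin d → ℂ))
          = σ i i + σ j j - 2 * (r : ℂ) := by
        rw [hQ, hc]
        have hcc : (starRingEnd ℂ) (-(starRingEnd ℂ) z / (r : ℂ)) = -z / (r : ℂ) := by
          rw [map_div₀, map_neg, Complex.conj_conj, Complex.conj_ofReal]
        rw [hcc]
        field_simp
        linear_combination (σ j j - 2 * (r:ℂ)) * hzz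
      have hpos := Complex.le_def.mp (hσ.dotProduct_mulVec_nonneg (Pi.single i 1 + Pi.single j c))
      rw [hQ2] at hpos
      have hre : (σ i i + σ j j - 2 * (r:ℂ)).re = (σ i i).re + (σ j j).re - 2 * r := by
        simp [Complex.sub_re, Complex.add_re, Complex.mul_re]
      rw [hre] at hpos
      have h1 := diag_re_le_trace hσ i
      have h2 := diag_re_le_trace hσ j
      have h3 := hpos.1
      have h4 := trace_re_nonneg hσ
      norm_num at h3
      linarith

/-! ### Passive energy and ergotropy -/

def pSet {d : ℕ} (H τ : Matrix (Fin d) (Fin d) ℂ) : Set ℝ :=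
  {x : ℝ | ∃ U ∈ Matrix.unitaryGroup (Fin d) ℂ, x = energy H (U * τ * Uᴴ)}

lemma passiveEnergy_eq {d : ℕ} (H τ : Matrix (Fin d) (Fin d) ℂ) :
    passiveEnergy H τ = sInf (pSet H τ) := rfl

lemma energy_mem_pSet {d : ℕ} (H τ : Matrix (Fin d) (Fin d) ℂ) : energy H τ ∈ pSet H τ :=
  ⟨1, Submonoid.one_mem _, by simp⟩

lemma energy_smul {d : ℕ} (H τ : Matrix (Fin d) (Fin d) ℂ) (r : ℝ) :
    energy H (r • τ) = r * energy H τ := by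
  simp [energy, Matrix.mul_smul, Complex.smul_re]

lemma energy_sum {d : ℕ} {ι : Type*} (s : Finset ι) (H : Matrix (Fin d) (Fin d) ℂ)
    (τ : ι → Matrix (Fin d) (Fin d) ℂ) :
    energy H (∑ a ∈ s, τ a) = ∑ a ∈ s, energy H (τ a) := by
  simp [energy, Finset.mul_sum, Matrix.trace_sum, Complex.re_sum]

noncomputable def hBound {d : ℕ} (H : Matrix (Fin d) (Fin d) ℂ) : ℝ :=
  ∑ i, ∑ j, ‖H i j‖

lemma energy_lower {d : ℕ} (H : Matrix (Fin d) (Fin d) ℂ) {σ : Matrix (Fin d) (Fin d) ℂ}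
    (hσ : σ.PosSemidef) : -(hBound H * σ.trace.re) ≤ energy H σ := by
  have he : energy H σ = ∑ i, ∑ j, (H i j * σ j i).re := by
    simp [energy, Matrix.trace, Matrix.mul_apply, Complex.re_sum, Matrix.diag]
  rw [he, hBound, Finset.sum_mul, neg_eq_neg_one_mul, Finset.mul_sum]
  refine Finset.sum_le_sum fun i _ => ?_
  rw [Finset.sum_mul, Finset.mul_sum]
  refine Finset.sum_le_sum fun j _ => ?_
  have h1 : -(‖H i j * σ j i‖) ≤ (H i j * σ j i).re :=
    (neg_le_neg (Complex.abs_re_le_norm _)).trans (neg_abs_le _)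
  have h2 : ‖H i j * σ j i‖ ≤ ‖H i j‖ * σ.trace.re := by
    rw [norm_mul]
    exact mul_le_mul_of_nonneg_left (entry_abs_le_trace hσ j i) (norm_nonneg _)
  nlinarith [norm_nonneg (H i j * σ j i)]

lemma pSet_mem_psd {d : ℕ} (H : Matrix (Fin d) (Fin d) ℂ) {σ : Matrix (Fin d) (Fin d) ℂ}
    (hσ : σ.PosSemidef) {x : ℝ} (hx : x ∈ pSet H σ) :
    -(hBound H * σ.trace.re) ≤ x := by
  obtain ⟨U, hU, rfl⟩ := hx
  have hpsd : (U * σ * Uᴴ).PosSemidef := hσ.mul_mul_conjTranspose_same U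
  have htr : (U * σ * Uᴴ).trace = σ.trace := by
    rw [Matrix.trace_mul_cycle, ← Matrix.star_eq_conjTranspose,
      (Matrix.mem_unitaryGroup_iff'.mp hU), Matrix.one_mul]
  have := energy_lower H hpsd
  rw [htr] at this
  exact this

lemma pSet_bddBelow {d : ℕ} (H : Matrix (Fin d) (Fin d) ℂ) {σ : Matrix (Fin d) (Fin d) ℂ}
    (hσ : σ.PosSemidef) : BddBelow (pSet H σ) :=
  ⟨-(hBound H * σ.trace.re), fun _ hx => pSet_mem_psd H hσ hx⟩

lemma pSet_smul {d : ℕ} (H τ : Matrix (Fin d) (Fin d) ℂ) (r : ℝ) :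
    pSet H (r • τ) = r • pSet H τ := by
  ext x
  constructor
  · rintro ⟨U, hU, rfl⟩
    exact ⟨energy H (U * τ * Uᴴ), ⟨U, hU, rfl⟩, by
      show r • energy H (U * τ * Uᴴ) = _
      rw [smul_eq_mul, ← energy_smul, Matrix.mul_smul, Matrix.smul_mul]⟩
  · rintro ⟨y, ⟨U, hU, rfl⟩, rfl⟩
    refine ⟨U, hU, ?_⟩
    show r • energy H (U * τ * Uᴴ) = _
    rw [smul_eq_mul, ← energy_smul, Matrix.mul_smul, Matrix.smul_mul]

lemma passiveEnergy_smul {d : ℕ} (H τ : Matrix (Fin d) (Fin d) ℂ) {r : ℝ} (hr : 0 ≤ r) :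
    passiveEnergy H (r • τ) = r * passiveEnergy H τ := by
  rw [passiveEnergy_eq, passiveEnergy_eq, pSet_smul H τ r,
    Real.sInf_smul_of_nonneg hr, smul_eq_mul]

lemma ergotropy_smul {d : ℕ} (H τ : Matrix (Fin d) (Fin d) ℂ) {r : ℝ} (hr : 0 ≤ r) :
    ergotropy H (r • τ) = r * ergotropy H τ := by
  rw [ergotropy, ergotropy, energy_smul, passiveEnergy_smul H τ hr]; ring

lemma ergotropy_zero {d : ℕ} (H : Matrix (Fin d) (Fin d) ℂ) :
    ergotropy H (0 : Matrix (Fin d) (Fin d) ℂ) = 0 := by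
  have := ergotropy_smul H (0 : Matrix (Fin d) (Fin d) ℂ) (le_refl (0:ℝ))
  simpa using this

lemma passiveEnergy_superadd {d n : ℕ} (H : Matrix (Fin d) (Fin d) ℂ)
    (τ : Fin n → Matrix (Fin d) (Fin d) ℂ) (hτ : ∀ a, (τ a).PosSemidef)
    (c : Fin n → ℝ) (hc : ∀ a, 0 ≤ c a) :
    ∑ a, c a * passiveEnergy H (τ a) ≤ passiveEnergy H (∑ a, c a • τ a) := by
  rw [passiveEnergy_eq]
  refine le_csInf ⟨_, energy_mem_pSet H _⟩ ?_
  rintro x ⟨U, hU, rfl⟩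
  have hdist : U * (∑ a, c a • τ a) * Uᴴ = ∑ a, c a • (U * τ a * Uᴴ) := by
    rw [Finset.mul_sum, Finset.sum_mul]
    exact Finset.sum_congr rfl fun a _ => by rw [Matrix.mul_smul, Matrix.smul_mul]
  rw [hdist, energy_sum]
  refine Finset.sum_le_sum fun a _ => ?_
  rw [energy_smul]
  exact mul_le_mul_of_nonneg_left
    (csInf_le (pSet_bddBelow H (hτ a)) ⟨U, hU, rfl⟩) (hc a)

lemma ergotropy_subadd {d n : ℕ} (H : Matrix (Fin d) (Fin d) ℂ)
    (τ : Fin n → Matrix (Fin d) (Fin d) ℂ) (hτ : ∀ a, (τ a).PosSemidef)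
    (c : Fin n → ℝ) (hc : ∀ a, 0 ≤ c a) :
    ergotropy H (∑ a, c a • τ a) ≤ ∑ a, c a * ergotropy H (τ a) := by
  have h1 := passiveEnergy_superadd H τ hτ c hc
  have h2 : energy H (∑ a, c a • τ a) = ∑ a, c a * energy H (τ a) := by
    rw [energy_sum]
    exact Finset.sum_congr rfl fun a _ => energy_smul H (τ a) (c a)
  rw [ergotropy, h2]
  have h3 : ∑ a, c a * ergotropy H (τ a)
      = ∑ a, c a * energy H (τ a) - ∑ a, c a * passiveEnergy H (τ a) := by
    rw [← Finset.sum_sub_distrib]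
    exact Finset.sum_congr rfl fun a _ => by rw [ergotropy]; ring
  rw [h3]
  linarith

/-! ### Partial trace facts -/

lemma ptraceA_posSemidef {dS dA : ℕ} {N : Matrix (Fin dS × Fin dA) (Fin dS × Fin dA) ℂ}
    (hN : N.PosSemidef) : (ptraceA N).PosSemidef := by
  refine Matrix.PosSemidef.of_dotProduct_mulVec_nonneg ?_ ?_
  · ext i j
    simp only [Matrix.conjTranspose_apply, ptraceA, Matrix.of_apply, star_sum]
    refine Finset.sum_congr rfl fun k _ => ?_
    have := congrFun (congrFun hN.1 (i, k)) (j, k)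
    simpa [Matrix.conjTranspose_apply] using this
  · intro x
    set y : Fin dA → (Fin dS × Fin dA) → ℂ :=
      fun k p => if p.2 = k then x p.1 else 0 with hy
    have hlhs : dotProduct (star x) (ptraceA N *ᵥ x)
        = ∑ i, ∑ k, ∑ j, star (x i) * N (i,k) (j,k) * x j := by
      simp only [dotProduct, Matrix.mulVec, ptraceA, Matrix.of_apply, Pi.star_apply,
        Finset.mul_sum, Finset.sum_mul]
      refine Finset.sum_congr rfl fun a _ => ?_
      rw [Finset.sum_comm]
      exact Finset.sum_congr rfl fun k _ => Finset.sum_congr rfl fun b _ => by ring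
    have hrhs : ∀ k, dotProduct (star (y k)) (N *ᵥ (y k))
        = ∑ i, ∑ j, star (x i) * N (i,k) (j,k) * x j := by
      intro k
      simp only [dotProduct, Matrix.mulVec, hy, Fintype.sum_prod_type,
        apply_ite (star : ℂ → ℂ), star_zero, ite_mul, zero_mul, mul_ite, mul_zero,
        Finset.mul_sum, Finset.sum_mul, Finset.sum_ite_eq', Finset.mem_univ, if_true,
        Pi.star_apply]
      refine Finset.sum_congr rfl fun a _ => ?_
      rw [Finset.sum_comm]
      simp only [Finset.sum_ite_eq', Finset.mem_univ, if_true]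
      exact Finset.sum_congr rfl fun b _ => by ring
    have hswap : dotProduct (star x) (ptraceA N *ᵥ x)
        = ∑ k, dotProduct (star (y k)) (N *ᵥ (y k)) := by
      rw [hlhs, Finset.sum_comm]
      exact Finset.sum_congr rfl fun k _ => (hrhs k).symm
    rw [hswap]
    exact Finset.sum_nonneg fun k _ => hN.dotProduct_mulVec_nonneg (y k)

lemma ptraceA_cyclic {dS dA : ℕ} (M : Matrix (Fin dS × Fin dA) (Fin dS × Fin dA) ℂ)
    (S : Matrix (Fin dA) (Fin dA) ℂ) :
    ptraceA (M * ((1 : Matrix (Fin dS) (Fin dS) ℂ) ⊗ₖ S))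
      = ptraceA (((1 : Matrix (Fin dS) (Fin dS) ℂ) ⊗ₖ S) * M) := by
  ext i j
  simp only [ptraceA, Matrix.of_apply, Matrix.mul_apply, Fintype.sum_prod_type,
    Matrix.kroneckerMap_apply, Matrix.one_apply, ite_mul, one_mul, zero_mul,
    mul_ite, mul_one, mul_zero, Finset.sum_ite_eq', Finset.sum_ite_eq, Finset.mem_univ, if_true]
  conv_lhs => rw [Finset.sum_comm]
  simp only [Finset.sum_ite_eq', Finset.sum_ite_eq, Finset.mem_univ, if_true, Finset.sum_ite_irrel,
    Finset.sum_const_zero]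
  rw [Finset.sum_comm]
  exact Finset.sum_congr rfl fun a _ => Finset.sum_congr rfl fun b _ => mul_comm _ _

lemma kronecker_one_hermitian {dS dA : ℕ} {S : Matrix (Fin dA) (Fin dA) ℂ}
    (hS : S.IsHermitian) :
    ((1 : Matrix (Fin dS) (Fin dS) ℂ) ⊗ₖ S)ᴴ = (1 : Matrix (Fin dS) (Fin dS) ℂ) ⊗ₖ S := by
  ext ⟨i, k⟩ ⟨j, l⟩
  simp only [Matrix.conjTranspose_apply, Matrix.kroneckerMap_apply, Matrix.one_apply, star_mul',
    apply_ite (star : ℂ → ℂ), star_one, star_zero]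
  have : (star (S l k) : ℂ) = S k l := congrFun (congrFun hS k) l
  rw [this]
  by_cases h : i = j <;> simp [h, eq_comm]

lemma ptraceA_mul_kron_posSemidef {dS dA : ℕ}
    {ρ : Matrix (Fin dS × Fin dA) (Fin dS × Fin dA) ℂ} (hρ : ρ.PosSemidef)
    {P : Matrix (Fin dA) (Fin dA) ℂ} (hP : P.PosSemidef) :
    (ptraceA (ρ * ((1 : Matrix (Fin dS) (Fin dS) ℂ) ⊗ₖ P))).PosSemidef := by
  obtain ⟨S, hSh, hsq⟩ : ∃ S : Matrix (Fin dA) (Fin dA) ℂ, S.IsHermitian ∧ S * S = P := by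
    open scoped MatrixOrder in
    exact ⟨CFC.sqrt P, (CFC.sqrt_nonneg P).posSemidef.1, CFC.sqrt_mul_sqrt_self P hP.nonneg⟩
  have hkron : (1 : Matrix (Fin dS) (Fin dS) ℂ) ⊗ₖ P
      = ((1 : Matrix (Fin dS) (Fin dS) ℂ) ⊗ₖ S) * ((1 : Matrix (Fin dS) (Fin dS) ℂ) ⊗ₖ S) := by
    rw [← Matrix.mul_kronecker_mul, Matrix.one_mul, hsq]
  rw [hkron, ← Matrix.mul_assoc, ptraceA_cyclic, ← Matrix.mul_assoc]
  have hherm := kronecker_one_hermitian (dS := dS) hSh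
  have heq : ((1 : Matrix (Fin dS) (Fin dS) ℂ) ⊗ₖ S) * ρ * ((1 : Matrix (Fin dS) (Fin dS) ℂ) ⊗ₖ S)
      = ((1 : Matrix (Fin dS) (Fin dS) ℂ) ⊗ₖ S)ᴴ * ρ * ((1 : Matrix (Fin dS) (Fin dS) ℂ) ⊗ₖ S) := by
    rw [hherm]
  rw [heq]
  exact ptraceA_posSemidef (hρ.conjTranspose_mul_mul_same _)

lemma trace_ptraceA {dS dA : ℕ} (M : Matrix (Fin dS × Fin dA) (Fin dS × Fin dA) ℂ) :
    (ptraceA M).trace = M.trace := by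
  simp [ptraceA, Matrix.trace, Matrix.diag, Fintype.sum_prod_type]

/-! ### The key identity -/

lemma term_eq {dS dA : ℕ} (H : Matrix (Fin dS) (Fin dS) ℂ)
    {ρSA : Matrix (Fin dS × Fin dA) (Fin dS × Fin dA) ℂ} (hρ : ρSA.PosSemidef)
    {P : Matrix (Fin dA) (Fin dA) ℂ} (hP : P.PosSemidef) :
    outProb ρSA P * ergotropy H (condState ρSA P)
      = ergotropy H (ptraceA (ρSA * ((1 : Matrix (Fin dS) (Fin dS) ℂ) ⊗ₖ P))) := by
  set τ := ptraceA (ρSA * ((1 : Matrix (Fin dS) (Fin dS) ℂ) ⊗ₖ P)) with hτ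
  have hpsd : τ.PosSemidef := ptraceA_mul_kron_posSemidef hρ hP
  have hq : outProb ρSA P = τ.trace.re := by
    rw [outProb, hτ, trace_ptraceA]
  have hq0 : 0 ≤ outProb ρSA P := by rw [hq]; exact trace_re_nonneg hpsd
  have hcs : condState ρSA P = (outProb ρSA P)⁻¹ • τ := rfl
  rcases eq_or_lt_of_le hq0 with h0 | hpos
  · have hτ0 : τ = 0 := by
      ext i j
      have h1 := entry_abs_le_trace hpsd i j
      rw [← hq, ← h0] at h1
      have := le_antisymm h1 (norm_nonneg _)
      simpa using norm_eq_zero.mp this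
    rw [hcs, hτ0, smul_zero, ergotropy_zero, ← h0]
    ring
  · rw [hcs, ergotropy_smul H τ (inv_nonneg.mpr hq0), ← mul_assoc,
      mul_inv_cancel₀ (ne_of_gt hpos), one_mul]

end DaemonAux

/-- coarse-graining a POVM cannot increase the daemonic ergotropy. -/
theorem daemonic_ergotropy_coarse_graining {dS dA n m : ℕ}
    (H : Matrix (Fin dS) (Fin dS) ℂ) (hH : H.IsHermitian)
    (ρSA : Matrix (Fin dS × Fin dA) (Fin dS × Fin dA) ℂ)
    (hρ : ρSA.PosSemidef) (htr : ρSA.trace = 1)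
    (Pov : Fin n → Matrix (Fin dA) (Fin dA) ℂ)
    (hPovpos : ∀ a, (Pov a).PosSemidef) (hPovsum : ∑ a, Pov a = 1)
    (Pov' : Fin m → Matrix (Fin dA) (Fin dA) ℂ)
    (hPov'pos : ∀ b, (Pov' b).PosSemidef) (hPov'sum : ∑ b, Pov' b = 1)
    (lam : Fin m → Fin n → ℝ) (hlam : ∀ b a, 0 ≤ lam b a)
    (hlamsum : ∀ a, ∑ b, lam b a = 1)
    (hcoarse : ∀ b, Pov' b = ∑ a, (lam b a : ℂ) • Pov a) :
    ∑ b, outProb ρSA (Pov' b) * ergotropy H (condState ρSA (Pov' b)) ≤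
      ∑ a, outProb ρSA (Pov a) * ergotropy H (condState ρSA (Pov a)) := by
  classical
  set τa : Fin n → Matrix (Fin dS) (Fin dS) ℂ :=
    fun a => ptraceA (ρSA * ((1 : Matrix (Fin dS) (Fin dS) ℂ) ⊗ₖ Pov a)) with hτa
  have hτapsd : ∀ a, (τa a).PosSemidef :=
    fun a => DaemonAux.ptraceA_mul_kron_posSemidef hρ (hPovpos a)
  have hdecomp : ∀ b, ptraceA (ρSA * ((1 : Matrix (Fin dS) (Fin dS) ℂ) ⊗ₖ Pov' b))
      = ∑ a, lam b a • τa a := by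
    intro b
    have hk : (1 : Matrix (Fin dS) (Fin dS) ℂ) ⊗ₖ Pov' b
        = ∑ a, ((lam b a : ℂ) • ((1 : Matrix (Fin dS) (Fin dS) ℂ) ⊗ₖ Pov a)) := by
      rw [hcoarse b]
      ext p q
      simp only [Matrix.kroneckerMap_apply, Matrix.sum_apply, Matrix.smul_apply,
        smul_eq_mul, Finset.mul_sum]
      exact Finset.sum_congr rfl fun a _ => by ring
    rw [hk, Finset.mul_sum]
    have hterm : ∀ a : Fin n, ρSA * ((lam b a : ℂ) • ((1 : Matrix (Fin dS) (Fin dS) ℂ) ⊗ₖ Pov a))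
        = lam b a • (ρSA * ((1 : Matrix (Fin dS) (Fin dS) ℂ) ⊗ₖ Pov a)) := by
      intro a
      rw [Matrix.mul_smul]
      ext p q
      simp [Matrix.smul_apply, Complex.real_smul]
    rw [Finset.sum_congr rfl fun a _ => hterm a]
    ext i j
    simp only [hτa, ptraceA, Matrix.of_apply, Matrix.sum_apply, Matrix.smul_apply,
      Finset.smul_sum]
    rw [Finset.sum_comm]
  have hL : ∀ b, outProb ρSA (Pov' b) * ergotropy H (condState ρSA (Pov' b))
      = ergotropy H (∑ a, lam b a • τa a) := fun b => by
    rw [DaemonAux.term_eq H hρ (hPov'pos b), hdecomp b]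
  have hR : ∀ a, outProb ρSA (Pov a) * ergotropy H (condState ρSA (Pov a))
      = ergotropy H (τa a) := fun a => DaemonAux.term_eq H hρ (hPovpos a)
  calc ∑ b, outProb ρSA (Pov' b) * ergotropy H (condState ρSA (Pov' b))
      = ∑ b, ergotropy H (∑ a, lam b a • τa a) := Finset.sum_congr rfl fun b _ => hL b
    _ ≤ ∑ b, ∑ a, lam b a * ergotropy H (τa a) :=
        Finset.sum_le_sum fun b _ => DaemonAux.ergotropy_subadd H τa hτapsd (lam b) (hlam b)
    _ = ∑ a, (∑ b, lam b a) * ergotropy H (τa a) := by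
        rw [Finset.sum_comm]
        exact Finset.sum_congr rfl fun a _ => (Finset.sum_mul _ _ _).symm
    _ = ∑ a, ergotropy H (τa a) := Finset.sum_congr rfl fun a _ => by rw [hlamsum a, one_mul]
    _ = ∑ a, outProb ρSA (Pov a) * ergotropy H (condState ρSA (Pov a)) :=
        Finset.sum_congr rfl fun a _ => (hR a).symm
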